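/- The bound $|a_5| \leq 1/4$ for the class $\mathcal{S}^*_{\sin}$ is sharp: the function $H(z) = z \exp\left( \int_0^z \frac{\sin(t^4)}{t}\, dt \right)$ is analytic on $\mathbb{D}$, belongs to $\mathcal{A}$, satisfies $z H'(z)/H(z) = 1 + \sin(z^4)$ for all $z \in \mathbb{D}$ (hence $H \in \mathcal{S}^*_{\sin}$, since $z \mapsto z^4$ is a Schwarz function), and its fifth Taylor coefficient at the origin equals $1/4$. -/

import Mathlib

open Complex Metric

namespace ExtremalSinAux

open Filter Function

lemma iterAnalytic {f : ℂ → ℂ} {U : Set ℂ} (hf : AnalyticOnNhd ℂ f U) (n : ℕ) :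
    AnalyticOnNhd ℂ (deriv^[n] f) U := by
  induction n with
  | zero => exact hf
  | succ n ih => rw [Function.iterate_succ_apply']; exact ih.deriv

lemma eqOn_iter_deriv {F G : ℂ → ℂ} {U : Set ℂ} (hU : IsOpen U)
    (h : Set.EqOn F G U) (n : ℕ) : Set.EqOn (deriv^[n] F) (deriv^[n] G) U := by
  induction n with
  | zero => exact h
  | succ n ih =>
    intro z hz
    rw [Function.iterate_succ_apply', Function.iterate_succ_apply']
    exact Filter.EventuallyEq.deriv_eq (Filter.eventuallyEq_of_mem (hU.mem_nhds hz) ih)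

lemma hasDerivAt_iter {f : ℂ → ℂ} {U : Set ℂ} (hf : AnalyticOnNhd ℂ f U) (k : ℕ)
    {z : ℂ} (hz : z ∈ U) : HasDerivAt (deriv^[k] f) (deriv^[k+1] f z) z := by
  rw [Function.iterate_succ_apply']
  exact ((iterAnalytic hf k) z hz).differentiableAt.hasDerivAt

/-- iterated derivatives of `z * f z`. -/
lemma iter_deriv_id_mul {f : ℂ → ℂ} {U : Set ℂ} (hU : IsOpen U)
    (hf : AnalyticOnNhd ℂ f U) (n : ℕ) :
    Set.EqOn (deriv^[n+1] (fun w => w * f w))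
      (fun z => (n+1 : ℂ) * deriv^[n] f z + z * deriv^[n+1] f z) U := by
  induction n with
  | zero =>
    intro z hz
    have h1 : HasDerivAt (fun w => w * f w) (1 * f z + z * deriv f z) z :=
      (hasDerivAt_id z).mul ((hf z hz).differentiableAt.hasDerivAt)
    simpa using h1.deriv
  | succ n ih =>
    intro z hz
    rw [Function.iterate_succ_apply']
    rw [Filter.EventuallyEq.deriv_eq (Filter.eventuallyEq_of_mem (hU.mem_nhds hz) ih)]
    have h2 : HasDerivAt (fun z => (n+1 : ℂ) * deriv^[n] f z + z * deriv^[n+1] f z)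
        ((n+1 : ℂ) * deriv^[n+1] f z + (1 * deriv^[n+1] f z + z * deriv^[n+2] f z)) z :=
      ((hasDerivAt_iter hf n hz).const_mul _).add
        ((hasDerivAt_id z).mul (hasDerivAt_iter hf (n+1) hz))
    rw [h2.deriv]
    push_cast
    ring

noncomputable def S0 : ℂ → ℂ := fun z => Complex.sin (z^4)
noncomputable def F1 : ℂ → ℂ := fun z => 4*z^3 * Complex.cos (z^4)
noncomputable def F2 : ℂ → ℂ := fun z => 12*z^2 * Complex.cos (z^4) - 16*z^6 * Complex.sin (z^4)
noncomputable def F3 : ℂ → ℂ := fun z =>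
  24*z * Complex.cos (z^4) - 144*z^5 * Complex.sin (z^4) - 64*z^9 * Complex.cos (z^4)
noncomputable def F4 : ℂ → ℂ := fun z =>
  24 * Complex.cos (z^4) - 816*z^4 * Complex.sin (z^4) - 1152*z^8 * Complex.cos (z^4)
    + 256*z^12 * Complex.sin (z^4)

lemma hpow4 (z : ℂ) : HasDerivAt (fun z : ℂ => z^4) (4*z^3) z := by
  simpa using hasDerivAt_pow 4 z

lemma hsin4 (z : ℂ) : HasDerivAt (fun z : ℂ => Complex.sin (z^4)) (Complex.cos (z^4) * (4*z^3)) z :=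
  by have := (Complex.hasDerivAt_sin (z^4)).comp z (hpow4 z); exact this

lemma hcos4 (z : ℂ) : HasDerivAt (fun z : ℂ => Complex.cos (z^4)) (-Complex.sin (z^4) * (4*z^3)) z :=
  by have := (Complex.hasDerivAt_cos (z^4)).comp z (hpow4 z); exact this

lemma hS0 (z : ℂ) : HasDerivAt S0 (F1 z) z := by
  have := hsin4 z
  unfold S0 F1; convert this using 1; ring

lemma hF1 (z : ℂ) : HasDerivAt F1 (F2 z) z := by
  have h : HasDerivAt (fun z : ℂ => 4*z^3 * Complex.cos (z^4))
      ((4*(3*z^2)) * Complex.cos (z^4) + 4*z^3 * (-Complex.sin (z^4) * (4*z^3))) z :=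
    (((hasDerivAt_pow 3 z).const_mul 4).congr_deriv (by push_cast; ring)).mul (hcos4 z)
  unfold F1 F2; convert h using 1; ring

lemma hF2 (z : ℂ) : HasDerivAt F2 (F3 z) z := by
  have h : HasDerivAt (fun z : ℂ => 12*z^2 * Complex.cos (z^4) - 16*z^6 * Complex.sin (z^4))
      (((12*(2*z)) * Complex.cos (z^4) + 12*z^2 * (-Complex.sin (z^4) * (4*z^3)))
        - ((16*(6*z^5)) * Complex.sin (z^4) + 16*z^6 * (Complex.cos (z^4) * (4*z^3)))) z :=
    ((((hasDerivAt_pow 2 z).const_mul 12).congr_deriv (by push_cast; ring)).mul (hcos4 z)).sub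
      ((((hasDerivAt_pow 6 z).const_mul 16).congr_deriv (by push_cast; ring)).mul (hsin4 z))
  unfold F2 F3; convert h using 1; ring

lemma hF3 (z : ℂ) : HasDerivAt F3 (F4 z) z := by
  have h : HasDerivAt (fun z : ℂ =>
      24*z * Complex.cos (z^4) - 144*z^5 * Complex.sin (z^4) - 64*z^9 * Complex.cos (z^4))
      ((24 * Complex.cos (z^4) + 24*z * (-Complex.sin (z^4) * (4*z^3)))
        - ((144*(5*z^4)) * Complex.sin (z^4) + 144*z^5 * (Complex.cos (z^4) * (4*z^3)))
        - ((64*(9*z^8)) * Complex.cos (z^4) + 64*z^9 * (-Complex.sin (z^4) * (4*z^3)))) z :=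
    (((((hasDerivAt_id z).const_mul 24).congr_deriv (by ring)).mul (hcos4 z)).sub
      ((((hasDerivAt_pow 5 z).const_mul 144).congr_deriv (by push_cast; ring)).mul (hsin4 z))).sub
      ((((hasDerivAt_pow 9 z).const_mul 64).congr_deriv (by push_cast; ring)).mul (hcos4 z))
  unfold F3 F4; convert h using 1; ring

lemma S0vals : deriv^[1] S0 0 = 0 ∧ deriv^[2] S0 0 = 0 ∧ deriv^[3] S0 0 = 0 ∧
    deriv^[4] S0 0 = 24 := by
  have h1 : deriv^[1] S0 = F1 := by funext z; simpa using (hS0 z).deriv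
  have h2 : deriv^[2] S0 = F2 := by
    funext z; rw [show (2:ℕ) = 1+1 from rfl, Function.iterate_succ_apply', h1]; exact (hF1 z).deriv
  have h3 : deriv^[3] S0 = F3 := by
    funext z; rw [show (3:ℕ) = 2+1 from rfl, Function.iterate_succ_apply', h2]; exact (hF2 z).deriv
  have h4 : deriv^[4] S0 = F4 := by
    funext z; rw [show (4:ℕ) = 3+1 from rfl, Function.iterate_succ_apply', h3]; exact (hF3 z).deriv
  refine ⟨?_, ?_, ?_, ?_⟩
  · rw [h1]; simp [F1]
  · rw [h2]; simp [F2]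
  · rw [h3]; simp [F3]
  · rw [h4]; simp [F4]

lemma gvals {g : ℂ → ℂ} (hg : AnalyticOnNhd ℂ g (ball (0:ℂ) 1))
    (hg' : ∀ z ∈ ball (0:ℂ) 1, z * deriv g z = Complex.sin (z ^ 4)) :
    deriv^[1] g 0 = 0 ∧ deriv^[2] g 0 = 0 ∧ deriv^[3] g 0 = 0 ∧ deriv^[4] g 0 = 6 := by
  have h0 : (0:ℂ) ∈ ball (0:ℂ) 1 := mem_ball_self one_pos
  have hEq : Set.EqOn (fun w => w * deriv g w) S0 (ball (0:ℂ) 1) := by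
    intro z hz
    simpa [S0] using hg' z hz
  have key : ∀ n : ℕ, ((n:ℂ)+1) * deriv^[n+1] g 0 = deriv^[n+1] S0 0 := by
    intro n
    have h1 := eqOn_iter_deriv isOpen_ball hEq (n+1) h0
    rw [iter_deriv_id_mul isOpen_ball hg.deriv n h0] at h1
    rw [← Function.iterate_succ_apply] at h1
    simpa using h1
  obtain ⟨s1, s2, s3, s4⟩ := S0vals
  have k0 := key 0; have k1 := key 1; have k2 := key 2; have k3 := key 3
  rw [show (0:ℕ)+1 = 1 from rfl, s1] at k0
  rw [show (1:ℕ)+1 = 2 from rfl, s2] at k1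
  rw [show (2:ℕ)+1 = 3 from rfl, s3] at k2
  rw [show (3:ℕ)+1 = 4 from rfl, s4] at k3
  push_cast at k0 k1 k2 k3
  refine ⟨?_, ?_, ?_, ?_⟩
  · linear_combination k0
  · linear_combination k1 / 2
  · linear_combination k2 / 3
  · linear_combination k3 / 4

lemma Evals {g Ef : ℂ → ℂ} (hg : AnalyticOnNhd ℂ g (ball (0:ℂ) 1))
    (hg' : ∀ z ∈ ball (0:ℂ) 1, z * deriv g z = Complex.sin (z ^ 4))
    (hEa : AnalyticOnNhd ℂ Ef (ball (0:ℂ) 1))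
    (hE1 : Set.EqOn (deriv^[1] Ef) (fun z => deriv^[1] g z * deriv^[0] Ef z) (ball (0:ℂ) 1))
    (hEf0 : Ef 0 = 1) :
    deriv^[4] Ef 0 = 6 := by
  have h0 : (0:ℂ) ∈ ball (0:ℂ) 1 := mem_ball_self one_pos
  obtain ⟨d1, d2, d3, d4⟩ := gvals hg hg'
  have A2 : Set.EqOn (deriv^[2] Ef)
      (fun z => deriv^[2] g z * deriv^[0] Ef z + deriv^[1] g z * deriv^[1] Ef z)
      (ball (0:ℂ) 1) := by
    intro z hz
    have hd : deriv^[2] Ef z = deriv (fun w => deriv^[1] g w * deriv^[0] Ef w) z := by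
      rw [show (2:ℕ) = 1+1 from rfl, Function.iterate_succ_apply']
      exact (Filter.eventuallyEq_of_mem (isOpen_ball.mem_nhds hz) hE1).deriv_eq
    rw [hd, ((hasDerivAt_iter hg 1 hz).fun_mul (hasDerivAt_iter hEa 0 hz)).deriv]
  have A3 : Set.EqOn (deriv^[3] Ef)
      (fun z => (deriv^[3] g z * deriv^[0] Ef z + deriv^[2] g z * deriv^[1] Ef z)
        + (deriv^[2] g z * deriv^[1] Ef z + deriv^[1] g z * deriv^[2] Ef z))
      (ball (0:ℂ) 1) := by
    intro z hz
    have hd : deriv^[3] Ef z =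
        deriv (fun w => deriv^[2] g w * deriv^[0] Ef w + deriv^[1] g w * deriv^[1] Ef w) z := by
      rw [show (3:ℕ) = 2+1 from rfl, Function.iterate_succ_apply']
      exact (Filter.eventuallyEq_of_mem (isOpen_ball.mem_nhds hz) A2).deriv_eq
    rw [hd, (((hasDerivAt_iter hg 2 hz).fun_mul (hasDerivAt_iter hEa 0 hz)).fun_add
      ((hasDerivAt_iter hg 1 hz).fun_mul (hasDerivAt_iter hEa 1 hz))).deriv]
  have hd4 : deriv^[4] Ef 0 =
      deriv (fun w => (deriv^[3] g w * deriv^[0] Ef w + deriv^[2] g w * deriv^[1] Ef w)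
        + (deriv^[2] g w * deriv^[1] Ef w + deriv^[1] g w * deriv^[2] Ef w)) 0 := by
    rw [show (4:ℕ) = 3+1 from rfl, Function.iterate_succ_apply']
    exact (Filter.eventuallyEq_of_mem (isOpen_ball.mem_nhds h0) A3).deriv_eq
  have e1 : deriv^[1] Ef 0 = 0 := by
    rw [hE1 h0]
    show deriv^[1] g 0 * deriv^[0] Ef 0 = 0
    rw [d1, zero_mul]
  have e2 : deriv^[2] Ef 0 = 0 := by
    rw [A2 h0]
    show deriv^[2] g 0 * deriv^[0] Ef 0 + deriv^[1] g 0 * deriv^[1] Ef 0 = 0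
    rw [d1, d2, zero_mul, zero_mul, add_zero]
  rw [hd4, ((((hasDerivAt_iter hg 3 h0).fun_mul (hasDerivAt_iter hEa 0 h0)).fun_add
      ((hasDerivAt_iter hg 2 h0).fun_mul (hasDerivAt_iter hEa 1 h0))).fun_add
      (((hasDerivAt_iter hg 2 h0).fun_mul (hasDerivAt_iter hEa 1 h0)).fun_add
      ((hasDerivAt_iter hg 1 h0).fun_mul (hasDerivAt_iter hEa 2 h0)))).deriv]
  simp only [show (3:ℕ)+1 = 4 from rfl, show (2:ℕ)+1 = 3 from rfl, show (1:ℕ)+1 = 2 from rfl,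
    show (0:ℕ)+1 = 1 from rfl, Function.iterate_zero_apply]
  rw [d1, d2, d3, d4, e1, e2, hEf0]
  ring

end ExtremalSinAux

open ExtremalSinAux

/-- Sharpness for `𝒮*_sin`: the function `H(z) = z · exp(∫₀ᶻ sin(t⁴)/t dt)` is analytic on
`𝔻`, belongs to `𝒜` (`H(0) = 0`, `H'(0) = 1`), satisfies `z H'(z)/H(z) = 1 + sin(z⁴)`
on `𝔻` (hence `H ∈ 𝒮*_sin`), and its fifth Taylor coefficient equals `1/4`,
i.e. `H⁽⁵⁾(0)/5! = 1/4`, i.e. `H⁽⁵⁾(0) = 30`. The primitive is encoded as any analytic `g`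
on `𝔻` with `g(0) = 0` and `z g'(z) = sin(z⁴)`. -/
theorem extremal_sin
    (g : ℂ → ℂ) (hg : AnalyticOnNhd ℂ g (ball (0 : ℂ) 1)) (hg0 : g 0 = 0)
    (hg' : ∀ z ∈ ball (0 : ℂ) 1, z * deriv g z = Complex.sin (z ^ 4))
    (H : ℂ → ℂ) (hH : H = fun z => z * Complex.exp (g z)) :
    AnalyticOnNhd ℂ H (ball (0 : ℂ) 1) ∧ H 0 = 0 ∧ deriv H 0 = 1 ∧
      (∀ z ∈ ball (0 : ℂ) 1, z * deriv H z = (1 + Complex.sin (z ^ 4)) * H z) ∧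
      iteratedDeriv 5 H 0 = 30 := by
  have h0 : (0:ℂ) ∈ ball (0:ℂ) 1 := mem_ball_self one_pos
  have hEd : DifferentiableOn ℂ (fun z => Complex.exp (g z)) (ball (0:ℂ) 1) :=
    Complex.differentiable_exp.comp_differentiableOn hg.differentiableOn
  have hEa : AnalyticOnNhd ℂ (fun z => Complex.exp (g z)) (ball (0:ℂ) 1) :=
    hEd.analyticOnNhd isOpen_ball
  have hHd : DifferentiableOn ℂ (fun z => z * Complex.exp (g z)) (ball (0:ℂ) 1) :=
    differentiableOn_id.mul hEd
  refine ⟨?_, ?_, ?_, ?_, ?_⟩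
  · rw [hH]; exact hHd.analyticOnNhd isOpen_ball
  · rw [hH]; simp
  · rw [hH]
    rw [((hasDerivAt_id' (0:ℂ)).fun_mul ((hg 0 h0).differentiableAt.hasDerivAt.cexp)).deriv]
    simp [hg0]
  · intro z hz
    rw [hH]
    rw [((hasDerivAt_id' z).fun_mul ((hg z hz).differentiableAt.hasDerivAt.cexp)).deriv]
    linear_combination (z * Complex.exp (g z)) * (hg' z hz)
  · have hE1 : Set.EqOn (deriv^[1] (fun z => Complex.exp (g z)))
        (fun z => deriv^[1] g z * deriv^[0] (fun z => Complex.exp (g z)) z) (ball (0:ℂ) 1) := by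
      intro z hz
      simp only [Function.iterate_one, Function.iterate_zero_apply]
      rw [((hg z hz).differentiableAt.hasDerivAt.cexp).deriv]
      ring
    have hEf0 : (fun z => Complex.exp (g z)) 0 = 1 := by simp [hg0]
    have hE4 := Evals hg hg' hEa hE1 hEf0
    rw [iteratedDeriv_eq_iterate, hH]
    have h5 := iter_deriv_id_mul isOpen_ball hEa 4 h0
    simp only [] at h5
    rw [show (5:ℕ) = 4+1 from rfl]
    rw [show (deriv^[4+1] (fun z => z * Complex.exp (g z)) 0) =
      (deriv^[4+1] (fun w => w * (fun z => Complex.exp (g z)) w) 0) from rfl]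
    rw [h5]
    rw [hE4]
    norm_num
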